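/- Let f be a C¹-diffeomorphism of S¹ with irrational rotation number, let ε > 0, and let [a,b] be a maximal wandering interval of f. Then there exists a family of diffeomorphisms h_i: f^i([a,b]) → f^i([a,b]), i ∈ ℤ, such that: there is n₀ with h_i equal to the identity of f^i([a,b]) for all |i| ≥ n₀; and for every i ∈ ℤ the distorsion of h_{i+1}∘f∘h_i⁻¹: f^i([a,b]) → f^{i+1}([a,b]) is bounded by ε. -/

import Mathlib

open Set Filter

/-- `inArc a w b` : the point `w` (mod 1) lies strictly inside the positively oriented
open arc of the circle `ℝ/ℤ` from `a` (mod 1) to `b` (mod 1). -/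
def inArc (a w b : ℝ) : Prop :=
  0 < Int.fract (w - a) ∧ Int.fract (w - a) < Int.fract (b - a)

/-- A lift of an orientation-preserving `C¹`-diffeomorphism of the circle `S¹ = ℝ/ℤ`:
a `C¹` map `F : ℝ → ℝ` with `F (x+1) = F x + 1` and `F' > 0` everywhere. -/
structure CircleDiffeo where
  toFun : ℝ → ℝ
  contDiff : ContDiff ℝ 1 toFun
  deriv_pos : ∀ x : ℝ, 0 < deriv toFun x
  commute_translation : ∀ x : ℝ, toFun (x + 1) = toFun x + 1

/-- `f` has rotation number (a lift of) `α`. -/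
def hasRotationNumber (f : CircleDiffeo) (α : ℝ) : Prop :=
  Tendsto (fun n : ℕ => f.toFun^[n] 0 / (n : ℝ)) atTop (nhds α)

/-- The `C¹`-distance between (lifts of) circle maps : sup distance between the maps
plus sup distance between the derivatives (computed over a fundamental domain). -/
noncomputable def distC1 (f g : ℝ → ℝ) : ℝ :=
  (⨆ x : Icc (0:ℝ) 1, |f x.1 - g x.1|) + (⨆ x : Icc (0:ℝ) 1, |deriv f x.1 - deriv g x.1|)

/-- An orientation-preserving `C¹` diffeomorphism of the interval `[u,v]` onto itself
(described by a map `ℝ → ℝ`). -/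
structure IsIntervalDiffeo (h : ℝ → ℝ) (u v : ℝ) : Prop where
  contDiffOn : ContDiffOn ℝ 1 h (Set.Icc u v)
  fix_left : h u = u
  fix_right : h v = v
  mono : StrictMonoOn h (Set.Icc u v)
  deriv_pos : ∀ w ∈ Set.Icc u v, 0 < derivWithin h (Set.Icc u v) w

/-- The `C¹` distance from a diffeomorphism of `[0,1]` to the identity. -/
noncomputable def distId (g : ℝ → ℝ) : ℝ :=
  (⨆ x : Set.Icc (0:ℝ) 1, |g x.1 - x.1|) +
    (⨆ x : Set.Icc (0:ℝ) 1, |derivWithin g (Set.Icc (0:ℝ) 1) x.1 - 1|)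

instance : Fact ((0:ℝ) < 1) := ⟨zero_lt_one⟩

/-- The circle homeomorphism induced on `S¹ = ℝ/ℤ` by (the lift) `f`. -/
noncomputable def CircleDiffeo.proj (f : CircleDiffeo) :
    AddCircle (1:ℝ) → AddCircle (1:ℝ) :=
  fun z => ((f.toFun (((AddCircle.equivIco 1 0) z : ℝ))) : AddCircle (1:ℝ))

/-- `M` is the (unique) minimal set of `T` : a nonempty closed invariant set with no
proper nonempty closed invariant subset. -/
def IsMinimalSet (T : AddCircle (1:ℝ) → AddCircle (1:ℝ)) (M : Set (AddCircle (1:ℝ))) : Prop :=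
  M.Nonempty ∧ IsClosed M ∧ T '' M ⊆ M ∧
    ∀ M' : Set (AddCircle (1:ℝ)), M' ⊆ M → M'.Nonempty → IsClosed M' → T '' M' ⊆ M' → M' = M

/-- The (open) arc `(u,v)` of the circle is a maximal wandering interval of `T` :
its image in `S¹` is a connected component of the complement of the minimal set `M`. -/
def IsWanderingArc (M : Set (AddCircle (1:ℝ))) (u v : ℝ) : Prop :=
  ∃ z ∈ Mᶜ, connectedComponentIn Mᶜ z = (fun t : ℝ => (t : AddCircle (1:ℝ))) '' Set.Ioo u v

/-- The `k`-th iterate (`k ∈ ℤ`) of a circle diffeomorphism with lift `F` and inverse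
lift `Finv`. -/
noncomputable def zIter (F Finv : ℝ → ℝ) (k : ℤ) : ℝ → ℝ :=
  if 0 ≤ k then F^[k.toNat] else Finv^[(-k).toNat]

section Basic
variable {F Finv : ℝ → ℝ}

structure LiftPair (F Finv : ℝ → ℝ) : Prop where
  contDiff : ContDiff ℝ 1 F
  deriv_pos : ∀ x, 0 < deriv F x
  translate : ∀ x, F (x + 1) = F x + 1
  inv_left : ∀ x, Finv (F x) = x
  inv_contDiff : ContDiff ℝ 1 Finv
  inv_deriv_pos : ∀ x, 0 < deriv Finv x
  inv_translate : ∀ x, Finv (x + 1) = Finv x + 1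

namespace LiftPair
variable (hp : LiftPair F Finv)
include hp

lemma mono : StrictMono F := strictMono_of_deriv_pos hp.deriv_pos
lemma inv_mono : StrictMono Finv := strictMono_of_deriv_pos hp.inv_deriv_pos
lemma cont : Continuous F := hp.contDiff.continuous

lemma translate_nat : ∀ (n : ℕ) (x : ℝ), F (x + n) = F x + n := by
  intro n
  induction n with
  | zero => simp
  | succ n ih => intro x; push_cast; rw [← add_assoc, hp.translate, ih, add_assoc]

lemma translate_int : ∀ (k : ℤ) (x : ℝ), F (x + k) = F x + k := by
  intro k x
  rcases le_or_gt 0 k with h | h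
  · lift k to ℕ using h; exact_mod_cast hp.translate_nat k x
  · have hn : 0 ≤ -k := by omega
    lift (-k) to ℕ using hn with n hnn
    have : F (x + k + n) = F (x + k) + n := hp.translate_nat n _
    have h2 : (x + k) + (n:ℝ) = x := by
      have : ((n:ℤ):ℝ) = -(k:ℝ) := by exact_mod_cast congrArg (fun t : ℤ => (t:ℝ)) hnn
      push_cast at this ⊢
      linarith
    rw [h2] at this
    have := this.symm
    linarith [this]

lemma surj : Function.Surjective F := by
  intro y
  obtain ⟨n, hn⟩ := exists_nat_ge (|y - F 0| + 1)
  have habs := abs_le.1 (le_of_lt (lt_of_lt_of_le (lt_add_one _) hn))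
  have t1 : F (0 + ((-(n:ℤ) : ℤ) : ℝ)) = F 0 + ((-(n:ℤ) : ℤ) : ℝ) := hp.translate_int _ 0
  have t2 : F (0 + ((n : ℤ) : ℝ)) = F 0 + ((n : ℤ) : ℝ) := hp.translate_int _ 0
  push_cast at t1 t2
  norm_num at t1 t2
  have h1 : F (-(n:ℝ)) ≤ y := by rw [t1]; linarith [habs.1]
  have h2 : y ≤ F (n:ℝ) := by rw [t2]; linarith [habs.2]
  have hle : -(n:ℝ) ≤ (n:ℝ) := by linarith [Nat.cast_nonneg (α := ℝ) n]
  obtain ⟨x, _, hx⟩ := intermediate_value_Icc hle hp.cont.continuousOn ⟨h1, h2⟩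
  exact ⟨x, hx⟩

lemma inv_right : ∀ x, F (Finv x) = x := by
  intro x
  obtain ⟨z, rfl⟩ := hp.surj x
  rw [hp.inv_left]

lemma zIter_succ (i : ℤ) (x : ℝ) : zIter F Finv (i + 1) x = F (zIter F Finv i x) := by
  unfold zIter
  rcases le_or_gt 0 i with h | h
  · rw [if_pos h, if_pos (by omega), show (i + 1).toNat = i.toNat + 1 by omega,
      Function.iterate_succ_apply']
  · rcases eq_or_lt_of_le (show i + 1 ≤ 0 by omega) with h3 | h3
    · have hi : i = -1 := by omega
      subst hi
      norm_num
      simp [hp.inv_right]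
    · rw [if_neg (by omega : ¬ (0:ℤ) ≤ i + 1), if_neg (by omega : ¬ (0:ℤ) ≤ i),
        show (-i).toNat = (-(i+1)).toNat + 1 by omega,
        Function.iterate_succ_apply', hp.inv_right]

lemma zIter_mono (i : ℤ) : StrictMono (zIter F Finv i) := by
  unfold zIter
  split
  · exact hp.mono.iterate _
  · exact hp.inv_mono.iterate _

lemma zIter_translate (i : ℤ) (x : ℝ) : zIter F Finv i (x + 1) = zIter F Finv i x + 1 := by
  have key : ∀ (G : ℝ → ℝ), (∀ y, G (y+1) = G y + 1) → ∀ (n:ℕ) (y:ℝ), G^[n] (y+1) = G^[n] y + 1 := by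
    intro G hG n
    induction n with
    | zero => simp
    | succ n ih => intro y; rw [Function.iterate_succ_apply', Function.iterate_succ_apply', ih, hG]
  unfold zIter
  split
  · exact key F hp.translate _ x
  · exact key Finv hp.inv_translate _ x

lemma zIter_add_nat (i : ℤ) (k : ℕ) (x : ℝ) :
    zIter F Finv (i + k) x = F^[k] (zIter F Finv i x) := by
  induction k with
  | zero => simp
  | succ k ih =>
      have : i + (k+1 : ℕ) = (i + k) + 1 := by push_cast; ring
      rw [this, hp.zIter_succ, ih, Function.iterate_succ_apply']

lemma deriv_translate (x : ℝ) : deriv F (x + 1) = deriv F x := by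
  have h1 : (fun y => F (y + 1)) = fun y => F y + 1 := funext hp.translate
  have h2 : deriv (fun y => F (y + 1)) x = deriv F (x + 1) := by
    simpa using deriv_comp_add_const F 1 x
  rw [h1] at h2
  rw [← h2, deriv_add_const]

lemma deriv_translate_int (k : ℤ) (x : ℝ) : deriv F (x + k) = deriv F x := by
  have key : ∀ (n:ℕ) (y:ℝ), deriv F (y + n) = deriv F y := by
    intro n
    induction n with
    | zero => simp
    | succ n ih => intro y; push_cast
                   rw [← add_assoc, hp.deriv_translate (y + n), ih]
  rcases le_or_gt 0 k with h | h
  · lift k to ℕ using h; exact_mod_cast key k x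
  · have hn : 0 ≤ -k := by omega
    lift (-k) to ℕ using hn with n hnn
    have h3 : x = (x + k) + n := by
      have : ((n:ℤ):ℝ) = -(k:ℝ) := by exact_mod_cast congrArg (fun t : ℤ => (t:ℝ)) hnn
      push_cast at this ⊢; linarith
    conv_rhs => rw [h3, key n (x + k)]

lemma ell_cont : Continuous (fun x => Real.log (deriv F x)) :=
  (hp.contDiff.continuous_deriv le_rfl).log (fun x => (hp.deriv_pos x).ne')

lemma ell_per (k : ℤ) (x : ℝ) : Real.log (deriv F (x + k)) = Real.log (deriv F x) := by
  rw [hp.deriv_translate_int k x]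

lemma ell_fract (x : ℝ) : Real.log (deriv F (Int.fract x)) = Real.log (deriv F x) := by
  have : Int.fract x + (⌊x⌋ : ℤ) = x := by rw [← Int.self_sub_floor]; ring
  conv_rhs => rw [← this]
  rw [hp.ell_per]

lemma ell_bound : ∃ C : ℝ, 0 ≤ C ∧ ∀ x, |Real.log (deriv F x)| ≤ C := by
  obtain ⟨C, hC⟩ := (isCompact_Icc (a := (0:ℝ)) (b := 1)).exists_bound_of_continuousOn
    hp.ell_cont.continuousOn
  refine ⟨C, le_trans (abs_nonneg _) (hC 0 (by norm_num)), fun x => ?_⟩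
  rw [← hp.ell_fract x]
  exact hC _ ⟨Int.fract_nonneg x, (Int.fract_lt_one x).le⟩

lemma ell_uc {ε : ℝ} (hε : 0 < ε) :
    ∃ η : ℝ, 0 < η ∧ η ≤ 1 ∧ ∀ x y : ℝ, |x - y| ≤ η →
      |Real.log (deriv F x) - Real.log (deriv F y)| ≤ ε := by
  have huc := (isCompact_Icc (a := (-1:ℝ)) (b := 2)).uniformContinuousOn_of_continuous
    hp.ell_cont.continuousOn
  obtain ⟨δ, hδ, hd⟩ := Metric.uniformContinuousOn_iff.1 huc ε hε
  refine ⟨min (δ/2) 1, by positivity, min_le_right _ _, fun x y hxy => ?_⟩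
  set k : ℤ := ⌊x⌋ with hk
  have hx' : x - k ∈ Icc (-1:ℝ) 2 := by
    constructor
    · have h2 : x - k = Int.fract x := (Int.self_sub_floor x)
      linarith [Int.fract_nonneg x]
    · have := Int.fract_lt_one x
      have h2 : x - k = Int.fract x := (Int.self_sub_floor x)
      rw [h2]; linarith
  have h2 : x - k = Int.fract x := (Int.self_sub_floor x)
  have hy' : y - k ∈ Icc (-1:ℝ) 2 := by
    have h0 : |x - y| ≤ 1 := le_trans hxy (min_le_right _ _)
    have h0' := abs_le.1 h0
    have := Int.fract_nonneg x
    have := Int.fract_lt_one x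
    constructor <;> [nlinarith [h2]; nlinarith [h2]]
  have hdist : dist (x - k) (y - k) < δ := by
    rw [Real.dist_eq]
    have : x - k - (y - k) = x - y := by ring
    rw [this]
    exact lt_of_le_of_lt (le_trans hxy (min_le_left _ _)) (by linarith)
  have := hd _ hx' _ hy' hdist
  rw [Real.dist_eq] at this
  rw [show x - (k:ℝ) = x + (-k : ℤ) by push_cast; ring] at this
  rw [show y - (k:ℝ) = y + (-k : ℤ) by push_cast; ring] at this
  rw [hp.ell_per, hp.ell_per] at this
  exact this.le

end LiftPair
end Basic

section Dens
open intervalIntegral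

noncomputable def densNorm (φ : ℝ → ℝ) (u v : ℝ) : ℝ :=
  (v - u) / ∫ x in u..v, Real.exp (φ x)

noncomputable def densMap (φ : ℝ → ℝ) (u v : ℝ) : ℝ → ℝ :=
  fun w => u + densNorm φ u v * ∫ x in u..w, Real.exp (φ x)

variable {φ : ℝ → ℝ} {u v : ℝ}

lemma dens_exp_cont (hφ : Continuous φ) : Continuous fun x => Real.exp (φ x) :=
  Real.continuous_exp.comp hφ

lemma dens_integral_pos (hφ : Continuous φ) (huv : u < v) :
    0 < ∫ x in u..v, Real.exp (φ x) :=
  intervalIntegral_pos_of_pos ((dens_exp_cont hφ).intervalIntegrable _ _)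
    (fun x => Real.exp_pos _) huv

lemma densNorm_pos (hφ : Continuous φ) (huv : u < v) : 0 < densNorm φ u v :=
  div_pos (by linarith) (dens_integral_pos hφ huv)

lemma densMap_hasDerivAt (hφ : Continuous φ) (w : ℝ) :
    HasDerivAt (densMap φ u v) (densNorm φ u v * Real.exp (φ w)) w :=
  ((((dens_exp_cont hφ).integral_hasStrictDerivAt u w).hasDerivAt).const_mul
    (densNorm φ u v)).const_add u

lemma densMap_deriv (hφ : Continuous φ) :
    deriv (densMap φ u v) = fun w => densNorm φ u v * Real.exp (φ w) :=
  funext fun w => (densMap_hasDerivAt hφ w).deriv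

lemma densMap_left : densMap φ u v u = u := by
  simp [densMap]

lemma densMap_right (hφ : Continuous φ) (huv : u < v) : densMap φ u v v = v := by
  have h := (dens_integral_pos hφ huv).ne'
  simp only [densMap, densNorm]
  field_simp
  ring

lemma densMap_strictMono (hφ : Continuous φ) (huv : u < v) : StrictMono (densMap φ u v) := by
  apply strictMono_of_deriv_pos
  intro x
  rw [(densMap_hasDerivAt hφ x).deriv]
  exact mul_pos (densNorm_pos hφ huv) (Real.exp_pos _)

lemma densMap_contDiff (hφ : Continuous φ) : ContDiff ℝ 1 (densMap φ u v) := by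
  rw [contDiff_one_iff_deriv]
  refine ⟨fun w => (densMap_hasDerivAt hφ w).differentiableAt, ?_⟩
  rw [densMap_deriv hφ]
  exact continuous_const.mul (dens_exp_cont hφ)

lemma densMap_derivWithin (hφ : Continuous φ) (huv : u < v) {w : ℝ} (hw : w ∈ Set.Icc u v) :
    derivWithin (densMap φ u v) (Set.Icc u v) w = densNorm φ u v * Real.exp (φ w) :=
  ((densMap_hasDerivAt hφ w).hasDerivWithinAt).derivWithin (uniqueDiffOn_Icc huv w hw)

lemma densMap_isIntervalDiffeo (hφ : Continuous φ) (huv : u < v) :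
    IsIntervalDiffeo (densMap φ u v) u v where
  contDiffOn := (densMap_contDiff hφ).contDiffOn
  fix_left := densMap_left
  fix_right := densMap_right hφ huv
  mono := (densMap_strictMono hφ huv).strictMonoOn _
  deriv_pos := fun w hw => by
    rw [densMap_derivWithin hφ huv hw]
    exact mul_pos (densNorm_pos hφ huv) (Real.exp_pos _)

lemma densMap_zero (huv : u < v) (hφ0 : ∀ x, φ x = 0) (w : ℝ) : densMap φ u v w = w := by
  have hone : ∀ x y : ℝ, (∫ t in x..y, Real.exp (φ t)) = y - x := by
    intro x y
    have : (fun t => Real.exp (φ t)) = fun _ => (1:ℝ) := by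
      funext t; rw [hφ0 t, Real.exp_zero]
    rw [this]
    simp
  simp only [densMap, densNorm, hone]
  have hne : v - u ≠ 0 := sub_ne_zero.2 huv.ne'
  field_simp
  ring

end Dens

section Construction

/-- interpolation weights -/
noncomputable def wt (n₀ : ℕ) (i j : ℤ) : ℝ :=
  if -(n₀:ℤ) ≤ i ∧ i ≤ j then ((i:ℝ) + n₀)/((j:ℝ) + n₀) else 0

lemma wt_eq_zero_left {n₀ : ℕ} {i : ℤ} (j : ℤ) (h : i ≤ -(n₀:ℤ)) : wt n₀ i j = 0 := by
  unfold wt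
  split_ifs with hc
  · have : i = -(n₀:ℤ) := le_antisymm h hc.1
    rw [this]
    push_cast
    ring_nf
  · rfl

lemma wt_eq_zero_right {n₀ : ℕ} {i j : ℤ} (h : j < i) : wt n₀ i j = 0 :=
  if_neg (by intro hc; omega)

lemma wt_self {n₀ : ℕ} {i : ℤ} (h : -(n₀:ℤ) ≤ i) (h2 : (0:ℝ) < (i:ℝ) + n₀) :
    wt n₀ i i = 1 := by
  unfold wt
  rw [if_pos ⟨h, le_rfl⟩, div_self h2.ne']

lemma wt_diff {n₀ : ℕ} {i j : ℤ} (hij : i < j) (hi : -(n₀:ℤ) ≤ i) :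
    wt n₀ (i+1) j - wt n₀ i j = 1/((j:ℝ) + n₀) := by
  unfold wt
  rw [if_pos ⟨by omega, by omega⟩, if_pos ⟨hi, by omega⟩, div_sub_div_same]
  push_cast
  congr 1
  ring

noncomputable def phiFun (F : ℝ → ℝ) (Bf : Finset ℤ) (cv : ℤ → ℝ) (n₀ : ℕ) (i : ℤ) (w : ℝ) : ℝ :=
  ∑ j ∈ Bf, wt n₀ i j * (Real.log (deriv F (F^[(j - i).toNat] w)) - cv j)

lemma construction {F Finv : ℝ → ℝ} (hp : LiftPair F Finv) {ε a b : ℝ} (hε : 0 < ε)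
    (hab : a < b)
    (hlen : ∀ η : ℝ, 0 < η → {j : ℤ | η < zIter F Finv j b - zIter F Finv j a}.Finite) :
    ∃ (n₀ : ℕ) (h : ℤ → ℝ → ℝ),
      (∀ i : ℤ, IsIntervalDiffeo (h i) (zIter F Finv i a) (zIter F Finv i b)) ∧
      (∀ i : ℤ, (n₀ : ℤ) ≤ |i| →
        ∀ w ∈ Set.Icc (zIter F Finv i a) (zIter F Finv i b), h i w = w) ∧
      (∀ i : ℤ,
        ∀ w₁ ∈ Set.Icc (zIter F Finv i a) (zIter F Finv i b),
        ∀ w₂ ∈ Set.Icc (zIter F Finv i a) (zIter F Finv i b),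
          Real.log
            ((derivWithin (h (i + 1))
                (Set.Icc (zIter F Finv (i + 1) a) (zIter F Finv (i + 1) b)) (F w₁) *
              deriv F w₁ /
              derivWithin (h i)
                (Set.Icc (zIter F Finv i a) (zIter F Finv i b)) w₁) /
            (derivWithin (h (i + 1))
                (Set.Icc (zIter F Finv (i + 1) a) (zIter F Finv (i + 1) b)) (F w₂) *
              deriv F w₂ /
              derivWithin (h i)
                (Set.Icc (zIter F Finv i a) (zIter F Finv i b)) w₂)) ≤ ε) := by
  have hℓ : ∀ x : ℝ, Real.log (deriv F x) = Real.log (deriv F x) := fun _ => rfl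
  have huv : ∀ i, zIter F Finv i a < zIter F Finv i b := fun i => hp.zIter_mono i hab
  obtain ⟨C, hC0, hC⟩ := hp.ell_bound
  obtain ⟨η, hη, hη1, hηuc⟩ := hp.ell_uc (show (0:ℝ) < ε/2 by linarith)
  set Bf : Finset ℤ := (hlen η hη).toFinset with hBf
  have hBfmem : ∀ j : ℤ, j ∈ Bf ↔ η < zIter F Finv j b - zIter F Finv j a := by
    intro j; rw [hBf, Set.Finite.mem_toFinset]; exact Iff.rfl
  set m : ℕ := Bf.sup fun j => j.natAbs with hm
  have hmB : ∀ j ∈ Bf, j.natAbs ≤ m := fun j hj => Finset.le_sup hj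
  set N : ℕ := ⌈(Bf.card * (2*C)) * 2 / ε⌉₊ with hN
  set n₀ : ℕ := m + 1 + N with hn₀
  have hmn : (m:ℝ) + 1 ≤ (n₀:ℝ) := by exact_mod_cast Nat.le_add_right (m+1) N
  have hPpos : (0:ℝ) < (n₀:ℝ) - m := by linarith
  have hPK : (Bf.card : ℝ) * (2*C) / ((n₀:ℝ) - m) ≤ ε/2 := by
    have h1 : ((Bf.card : ℝ) * (2*C)) * 2 / ε ≤ (N:ℝ) := Nat.le_ceil _
    have h2 : (N:ℝ) ≤ (n₀:ℝ) - m := by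
      have : (m:ℝ) + 1 + N = (n₀:ℝ) := by exact_mod_cast rfl
      linarith
    rw [div_le_iff₀ hPpos]
    rw [div_le_iff₀ hε] at h1
    nlinarith
  have hBn₀ : ∀ j ∈ Bf, -(n₀:ℤ) ≤ j ∧ j ≤ (n₀:ℤ) ∧ -(m:ℤ) ≤ j ∧ j ≤ (m:ℤ) := by
    intro j hj
    have := hmB j hj
    omega
  have hjP : ∀ j ∈ Bf, ((n₀:ℝ) - m) ≤ (j:ℝ) + n₀ := by
    intro j hj
    have h1 : -(m:ℤ) ≤ j := (hBn₀ j hj).2.2.1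
    have : -(m:ℝ) ≤ (j:ℝ) := by exact_mod_cast h1
    linarith
  set φ : ℤ → ℝ → ℝ := phiFun F Bf (fun j => Real.log (deriv F (zIter F Finv j a))) n₀ with hφ
  have hφc : ∀ i, Continuous (φ i) := by
    intro i
    apply continuous_finset_sum
    intro j _
    exact continuous_const.mul ((hp.ell_cont.comp (hp.cont.iterate _)).sub continuous_const)
  have hφzero : ∀ i : ℤ, (n₀:ℤ) ≤ |i| → ∀ w, φ i w = 0 := by
    intro i hi w
    rw [hφ]
    apply Finset.sum_eq_zero
    intro j hj
    rcases le_or_gt (n₀:ℤ) i with hpos | hneg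
    · rw [wt_eq_zero_right (by have := (hBn₀ j hj).2.2.2; omega), zero_mul]
    · have hile : i ≤ -(n₀:ℤ) := by
        rcases abs_cases i with ⟨h1, _⟩ | ⟨h1, _⟩ <;> omega
      rw [wt_eq_zero_left j hile, zero_mul]
  set h : ℤ → ℝ → ℝ := fun i => densMap (φ i) (zIter F Finv i a) (zIter F Finv i b) with hh
  refine ⟨n₀, h, fun i => densMap_isIntervalDiffeo (hφc i) (huv i), ?_, ?_⟩
  · intro i hi w _
    exact densMap_zero (huv i) (hφzero i hi) w
  -- distortion bound
  intro i w₁ hw₁ w₂ hw₂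
  have hsucca : zIter F Finv (i+1) a = F (zIter F Finv i a) := hp.zIter_succ i a
  have hsuccb : zIter F Finv (i+1) b = F (zIter F Finv i b) := hp.zIter_succ i b
  have hFw : ∀ w ∈ Set.Icc (zIter F Finv i a) (zIter F Finv i b),
      F w ∈ Set.Icc (zIter F Finv (i+1) a) (zIter F Finv (i+1) b) := by
    intro w hw
    rw [hsucca, hsuccb]
    exact ⟨hp.mono.monotone hw.1, hp.mono.monotone hw.2⟩
  have hlampos : ∀ k : ℤ, 0 < densNorm (φ k) (zIter F Finv k a) (zIter F Finv k b) :=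
    fun k => densNorm_pos (hφc k) (huv k)
  have hX : ∀ w ∈ Set.Icc (zIter F Finv i a) (zIter F Finv i b),
      derivWithin (h (i+1)) (Set.Icc (zIter F Finv (i+1) a) (zIter F Finv (i+1) b)) (F w) *
        deriv F w / derivWithin (h i) (Set.Icc (zIter F Finv i a) (zIter F Finv i b)) w
      = (densNorm (φ (i+1)) (zIter F Finv (i+1) a) (zIter F Finv (i+1) b) /
          densNorm (φ i) (zIter F Finv i a) (zIter F Finv i b)) *
          Real.exp (φ (i+1) (F w) + Real.log (deriv F w) - φ i w) := by
    intro w hw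
    rw [hh]
    rw [densMap_derivWithin (hφc (i+1)) (huv (i+1)) (hFw w hw),
        densMap_derivWithin (hφc i) (huv i) hw]
    have e2 : deriv F w = Real.exp (Real.log (deriv F w)) := (Real.exp_log (hp.deriv_pos w)).symm
    conv_lhs => rw [e2]
    simp only [Real.exp_sub, Real.exp_add]
    have h0 : Real.exp (φ i w) ≠ 0 := (Real.exp_pos _).ne'
    have hl0 : densNorm (φ i) (zIter F Finv i a) (zIter F Finv i b) ≠ 0 := (hlampos i).ne'
    field_simp
  rw [hX w₁ hw₁, hX w₂ hw₂]
  have hll : densNorm (φ (i+1)) (zIter F Finv (i+1) a) (zIter F Finv (i+1) b) /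
      densNorm (φ i) (zIter F Finv i a) (zIter F Finv i b) ≠ 0 :=
    (div_pos (hlampos (i+1)) (hlampos i)).ne'
  rw [mul_div_mul_left _ _ hll, ← Real.exp_sub, Real.log_exp]
  -- notation
  set ℓf : ℝ → ℝ := fun x => Real.log (deriv F x) with hℓf
  set cv : ℤ → ℝ := fun j => Real.log (deriv F (zIter F Finv j a)) with hcv
  set d : ℤ → ℝ := fun j => wt n₀ (i+1) j - wt n₀ i j with hd'
  set Xf : ℤ → ℝ → ℝ := fun j w => ℓf (F^[(j - i).toNat] w) - cv j with hXf
  have hkey : ∀ w, φ (i+1) (F w) + ℓf w - φ i w = ℓf w + ∑ j ∈ Bf, d j * Xf j w := by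
    intro w
    have hshift : φ (i+1) (F w) = ∑ j ∈ Bf, wt n₀ (i+1) j * Xf j w := by
      rw [hφ]
      unfold phiFun
      apply Finset.sum_congr rfl
      intro j _
      by_cases hij : i + 1 ≤ j
      · rw [hXf]
        simp only
        rw [show (j - i).toNat = (j - (i+1)).toNat + 1 by omega, Function.iterate_succ_apply]
      · rw [wt_eq_zero_right (by omega), zero_mul, zero_mul]
    have hphii : φ i w = ∑ j ∈ Bf, wt n₀ i j * Xf j w := by
      rw [hφ]; unfold phiFun; rfl
    rw [hshift, hphii]
    rw [show (∑ j ∈ Bf, wt n₀ (i+1) j * Xf j w) + ℓf w - ∑ j ∈ Bf, wt n₀ i j * Xf j w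
        = ℓf w + ((∑ j ∈ Bf, wt n₀ (i+1) j * Xf j w) - ∑ j ∈ Bf, wt n₀ i j * Xf j w) by ring,
      ← Finset.sum_sub_distrib]
    congr 1
    apply Finset.sum_congr rfl
    intro j _
    rw [hd']
    ring
  have hvaldiff : (φ (i+1) (F w₁) + ℓf w₁ - φ i w₁) - (φ (i+1) (F w₂) + ℓf w₂ - φ i w₂)
      = (ℓf w₁ - ℓf w₂) + ∑ j ∈ Bf, d j * (ℓf (F^[(j - i).toNat] w₁) - ℓf (F^[(j - i).toNat] w₂)) := by
    rw [hkey w₁, hkey w₂]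
    rw [show (ℓf w₁ + ∑ j ∈ Bf, d j * Xf j w₁) - (ℓf w₂ + ∑ j ∈ Bf, d j * Xf j w₂)
        = (ℓf w₁ - ℓf w₂) + ((∑ j ∈ Bf, d j * Xf j w₁) - ∑ j ∈ Bf, d j * Xf j w₂) by ring,
      ← Finset.sum_sub_distrib]
    congr 1
    apply Finset.sum_congr rfl
    intro j _
    rw [hXf]
    ring
  rw [hvaldiff]
  -- bounds
  have hY : ∀ x y : ℝ, |ℓf x - ℓf y| ≤ 2*C := by
    intro x y
    have h1 := abs_le.1 (hC x)
    have h2 := abs_le.1 (hC y)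
    rw [abs_le]
    constructor <;> simp only [hℓf] <;> linarith
  have hdb : ∀ j ∈ Bf, j ≠ i → |d j| ≤ 1/((n₀:ℝ) - m) := by
    intro j hj hji
    simp only [hd']
    rcases lt_or_gt_of_ne hji with hlt | hgt
    · rw [wt_eq_zero_right (show (j:ℤ) < i + 1 by omega), wt_eq_zero_right hlt, sub_zero,
        abs_zero]
      positivity
    · rcases le_or_gt (-(n₀:ℤ)) i with hge | hlt2
      · rw [wt_diff hgt hge]
        have hj0 : (0:ℝ) < (j:ℝ) + n₀ := lt_of_lt_of_le hPpos (hjP j hj)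
        rw [abs_of_pos (by positivity)]
        exact one_div_le_one_div_of_le hPpos (hjP j hj)
      · rw [wt_eq_zero_left j (show i + 1 ≤ -(n₀:ℤ) by omega),
          wt_eq_zero_left j (le_of_lt hlt2), sub_zero, abs_zero]
        positivity
  have hsum : |∑ j ∈ Bf.erase i, d j * (ℓf (F^[(j - i).toNat] w₁) - ℓf (F^[(j - i).toNat] w₂))|
      ≤ ε/2 := by
    calc |∑ j ∈ Bf.erase i, d j * (ℓf (F^[(j - i).toNat] w₁) - ℓf (F^[(j - i).toNat] w₂))|
        ≤ ∑ j ∈ Bf.erase i, |d j * (ℓf (F^[(j - i).toNat] w₁) - ℓf (F^[(j - i).toNat] w₂))| :=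
          Finset.abs_sum_le_sum_abs _ _
      _ ≤ ∑ _j ∈ Bf.erase i, (1/((n₀:ℝ) - m)) * (2*C) := by
          apply Finset.sum_le_sum
          intro j hj
          obtain ⟨hji, hjB⟩ := Finset.mem_erase.1 hj
          rw [abs_mul]
          exact mul_le_mul (hdb j hjB hji) (hY _ _) (abs_nonneg _) (by positivity)
      _ = ((Bf.erase i).card : ℝ) * ((1/((n₀:ℝ) - m)) * (2*C)) := by
          rw [Finset.sum_const, nsmul_eq_mul]
      _ ≤ (Bf.card : ℝ) * ((1/((n₀:ℝ) - m)) * (2*C)) := by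
          apply mul_le_mul_of_nonneg_right _ (by positivity)
          exact_mod_cast Finset.card_erase_le
      _ = (Bf.card : ℝ) * (2*C) / ((n₀:ℝ) - m) := by ring
      _ ≤ ε/2 := hPK
  by_cases hiB : i ∈ Bf
  · have hrw : ∑ j ∈ Bf, d j * (ℓf (F^[(j - i).toNat] w₁) - ℓf (F^[(j - i).toNat] w₂))
        = d i * (ℓf (F^[(i - i).toNat] w₁) - ℓf (F^[(i - i).toNat] w₂)) +
          ∑ j ∈ Bf.erase i, d j * (ℓf (F^[(j - i).toNat] w₁) - ℓf (F^[(j - i).toNat] w₂)) :=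
      (Finset.add_sum_erase _ _ hiB).symm
    have hdii : d i = -1 := by
      simp only [hd']
      rw [wt_eq_zero_right (show (i:ℤ) < i + 1 by omega),
        wt_self (by have := (hBn₀ i hiB).1; omega) (lt_of_lt_of_le hPpos (hjP i hiB))]
      ring
    rw [hrw, hdii]
    simp only [sub_self, Int.toNat_zero, Function.iterate_zero, id_eq]
    have := abs_le.1 hsum
    linarith
  · have herase : Bf.erase i = Bf := Finset.erase_eq_of_notMem hiB
    have hbase : |ℓf w₁ - ℓf w₂| ≤ ε/2 := by
      apply hηuc
      have hLi : zIter F Finv i b - zIter F Finv i a ≤ η := by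
        by_contra hcon
        exact hiB ((hBfmem i).2 (not_le.1 hcon))
      rw [abs_le]
      constructor
      · linarith [hw₁.1, hw₂.2]
      · linarith [hw₁.2, hw₂.1]
    rw [← herase]
    have h1 := abs_le.1 hbase
    have h2 := abs_le.1 hsum
    linarith

end Construction

section Dynamics

noncomputable abbrev circ : ℝ → AddCircle (1:ℝ) := fun t : ℝ => (t : AddCircle (1:ℝ))

lemma circ_cont : Continuous circ := AddCircle.continuous_mk' 1

lemma circ_eq_iff {x y : ℝ} : circ x = circ y ↔ ∃ k : ℤ, y = x + k := by
  constructor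
  · intro h
    rw [circ, QuotientAddGroup.eq_iff_sub_mem] at h
    obtain ⟨k, hk⟩ := h
    refine ⟨-k, ?_⟩
    simp only [zsmul_eq_mul, mul_one] at hk
    push_cast
    linarith
  · rintro ⟨k, rfl⟩
    rw [circ, QuotientAddGroup.eq_iff_sub_mem]
    exact ⟨-k, by simp⟩

lemma circ_arc_mem {u v x : ℝ} :
    circ x ∈ circ '' Set.Ioo u v ↔ ∃ k : ℤ, x + k ∈ Set.Ioo u v := by
  constructor
  · rintro ⟨w, hw, hwx⟩
    obtain ⟨k, hk⟩ := circ_eq_iff.1 hwx.symm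
    exact ⟨k, hk ▸ hw⟩
  · rintro ⟨k, hk⟩
    exact ⟨x + k, hk, (circ_eq_iff.2 ⟨k, rfl⟩).symm⟩

lemma circ_arc_not_mem_left {u v : ℝ} (h1 : u < v) (h2 : v < u + 1) :
    circ u ∉ circ '' Set.Ioo u v := by
  intro hc
  obtain ⟨k, hk1, hk2⟩ := circ_arc_mem.1 hc
  have hpos : (0:ℝ) < (k:ℝ) := by linarith
  have hposZ : (0:ℤ) < k := by exact_mod_cast hpos
  have hone : (1:ℝ) ≤ (k:ℝ) := by exact_mod_cast hposZ
  linarith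

lemma arc_eq_endpoints {u v u' v' : ℝ} (h1 : u < v) (h2 : v < u + 1)
    (h3 : u' < v') (h4 : v' < u' + 1)
    (heq : circ '' Set.Ioo u v = circ '' Set.Ioo u' v') : ∃ m : ℤ, u' = u + m := by
  -- u' is in the closure of the arc
  have hclos : circ u' ∈ closure (circ '' Set.Ioo u' v') := by
    have h5 : u' ∈ closure (Set.Ioo u' v') := by
      rw [closure_Ioo h3.ne]
      exact ⟨le_refl _, h3.le⟩
    exact map_mem_closure circ_cont h5 (Set.subset_preimage_image circ _)
  rw [← heq] at hclos
  have hsub : closure (circ '' Set.Ioo u v) ⊆ circ '' Set.Icc u v :=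
    closure_minimal (Set.image_mono (f := _) Set.Ioo_subset_Icc_self)
      (isCompact_Icc.image circ_cont).isClosed
  obtain ⟨w, hwIcc, hwu⟩ := hsub hclos
  obtain ⟨m, hm⟩ := circ_eq_iff.1 hwu
  have hnotmem : circ u' ∉ circ '' Set.Ioo u v := by
    rw [heq]
    exact circ_arc_not_mem_left h3 h4
  have hwnot : w ∉ Set.Ioo u v := by
    intro hcon
    exact hnotmem (hwu ▸ Set.mem_image_of_mem circ hcon)
  have hcases : w = u ∨ w = v := by
    rcases eq_or_lt_of_le hwIcc.1 with he | hlt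
    · exact Or.inl he.symm
    rcases eq_or_lt_of_le hwIcc.2 with he | hlt2
    · exact Or.inr he
    exact absurd ⟨hlt, hlt2⟩ hwnot
  rcases hcases with he | he
  · -- w = u : u' = u - m
    rw [he] at hm; exact ⟨m, hm⟩
  · -- w = v : flip case, contradiction
    rw [he] at hm
    exfalso
    set t : ℝ := min (u + 1 - v) (v' - u') / 2 with htdef
    have ht0 : 0 < t := by
      apply div_pos _ (by norm_num)
      exact lt_min (by linarith) (by linarith)
    have ht1 : t < u + 1 - v := by
      have := min_le_left (u + 1 - v) (v' - u')
      have h0 : 0 < u + 1 - v := by linarith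
      rw [htdef]
      have := lt_min (show 0 < u+1-v by linarith) (show 0 < v'-u' by linarith)
      calc min (u + 1 - v) (v' - u') / 2 < min (u + 1 - v) (v' - u') := by linarith
        _ ≤ u + 1 - v := min_le_left _ _
    have ht2 : t < v' - u' := by
      calc t < min (u + 1 - v) (v' - u') := by
            rw [htdef]
            have := lt_min (show 0 < u+1-v by linarith) (show 0 < v'-u' by linarith)
            linarith
        _ ≤ v' - u' := min_le_right _ _
    have hmem : circ (u' + t) ∈ circ '' Set.Ioo u' v' :=
      Set.mem_image_of_mem circ ⟨by linarith, by linarith⟩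
    rw [← heq] at hmem
    obtain ⟨k, hk1, hk2⟩ := circ_arc_mem.1 hmem
    -- u' = v + m ; u' + t + k ∈ (u, v)
    rw [hm] at hk1 hk2
    rcases le_or_gt 0 (m + k) with hq | hq
    · have : (0:ℝ) ≤ (m:ℝ) + k := by exact_mod_cast hq
      linarith
    · have : (m:ℝ) + k ≤ -1 := by
        have h9 : m + k ≤ -1 := by omega
        exact_mod_cast h9
      linarith

end Dynamics

section NoPeriodic

open Filter

lemma LiftPair.iter_translate_int {F Finv : ℝ → ℝ} (hp : LiftPair F Finv)
    (n : ℕ) (kk : ℤ) (x : ℝ) : F^[n] (x + kk) = F^[n] x + kk := by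
  induction n generalizing x with
  | zero => simp
  | succ n ih =>
      rw [Function.iterate_succ_apply, Function.iterate_succ_apply, hp.translate_int, ih]

lemma no_periodic {F Finv : ℝ → ℝ} (hp : LiftPair F Finv) {α : ℝ} (hα : Irrational α)
    (hrot : Tendsto (fun n : ℕ => F^[n] 0 / (n : ℝ)) atTop (nhds α))
    {u : ℝ} {k : ℕ} (hk : 0 < k) {m : ℤ} (hper : F^[k] u = u + m) : False := by
  have hFn : ∀ n : ℕ, F^[k*n] u = u + n*m := by
    intro n
    induction n with
    | zero => simp
    | succ n ih =>
        have : k*(n+1) = k*n + k := by ring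
        rw [this, Function.iterate_add_apply, hper, hp.iter_translate_int, ih]
        push_cast
        ring
  set p : ℤ := -⌈u⌉ with hpdef
  have hpl : u + p ≤ 0 := by
    have := Int.le_ceil u
    rw [hpdef]
    push_cast
    linarith
  have hpr : (0:ℝ) ≤ u + p + 1 := by
    have := Int.ceil_lt_add_one u
    rw [hpdef]
    push_cast
    linarith
  have hbound : ∀ n : ℕ, F^[n] u + p ≤ F^[n] 0 ∧ F^[n] 0 ≤ F^[n] u + p + 1 := by
    intro n
    constructor
    · calc F^[n] u + (p:ℝ) = F^[n] (u + p) := (hp.iter_translate_int n p u).symm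
        _ ≤ F^[n] 0 := (hp.mono.iterate n).monotone hpl
    · calc F^[n] 0 ≤ F^[n] (u + p + 1) := by
            apply (hp.mono.iterate n).monotone
            exact hpr
        _ = F^[n] u + p + 1 := by
            rw [show u + (p:ℝ) + 1 = u + ((p + 1 : ℤ) : ℝ) by push_cast; ring,
              hp.iter_translate_int]
            push_cast
            ring
  have hk0 : ((k:ℝ)) ≠ 0 := by positivity
  have haux : ∀ c : ℝ, Tendsto (fun n : ℕ => (u + n*m + c)/((k:ℝ)*n)) atTop
      (nhds ((m:ℝ)/k)) := by
    intro c
    have hev : (fun n : ℕ => ((u+c)/k) * (1/(n:ℝ)) + (m:ℝ)/k)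
        =ᶠ[atTop] (fun n : ℕ => (u + n*m + c)/((k:ℝ)*n)) := by
      filter_upwards [eventually_ge_atTop 1] with n hn
      have hn0 : (n:ℝ) ≠ 0 := by
        have : (0:ℝ) < n := by exact_mod_cast hn
        linarith
      field_simp
      ring
    have hlim : Tendsto (fun n : ℕ => ((u+c)/k) * (1/(n:ℝ)) + (m:ℝ)/k) atTop
        (nhds (((u+c)/k) * 0 + (m:ℝ)/k)) :=
      (tendsto_one_div_atTop_nhds_zero_nat.const_mul _).add_const _
    have := hlim.congr' hev
    simpa using this
  have htt : Tendsto (fun n : ℕ => F^[k*n] 0 / ((k:ℝ)*n)) atTop (nhds ((m:ℝ)/k)) := by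
    apply tendsto_of_tendsto_of_tendsto_of_le_of_le' (haux p) (haux ((p:ℝ)+1))
    · filter_upwards [eventually_ge_atTop 1] with n hn
      have hb := (hbound (k*n)).1
      rw [hFn n] at hb
      have h1 : (0:ℝ) < k := by exact_mod_cast hk
      have h2 : (0:ℝ) < n := by exact_mod_cast hn
      have hden : (0:ℝ) < (k:ℝ)*n := by positivity
      exact (div_le_div_iff_of_pos_right hden).2 (by linarith)
    · filter_upwards [eventually_ge_atTop 1] with n hn
      have hb := (hbound (k*n)).2
      rw [hFn n] at hb
      have h1 : (0:ℝ) < k := by exact_mod_cast hk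
      have h2 : (0:ℝ) < n := by exact_mod_cast hn
      have hden : (0:ℝ) < (k:ℝ)*n := by positivity
      exact (div_le_div_iff_of_pos_right hden).2 (by linarith)
  have hsm : StrictMono fun n : ℕ => k*n := strictMono_mul_left_of_pos hk
  have htends2 : Tendsto (fun n : ℕ => F^[k*n] 0 / ((k:ℝ)*n)) atTop (nhds α) := by
    have hcomp := hrot.comp hsm.tendsto_atTop
    have heqf : ((fun n : ℕ => F^[n] 0 / (n:ℝ)) ∘ fun n : ℕ => k*n)
        = fun n : ℕ => F^[k*n] 0 / ((k:ℝ)*n) := by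
      funext n
      simp only [Function.comp_apply]
      push_cast
      rfl
    rwa [heqf] at hcomp
  have heq : α = (m:ℝ)/k := tendsto_nhds_unique htends2 htt
  have hirr : Irrational ((m:ℝ)/(k:ℝ)) := heq ▸ hα
  exact hirr ⟨(m:ℚ)/(k:ℚ), by push_cast; rfl⟩

end NoPeriodic

section MoreBasic
variable {F Finv : ℝ → ℝ}

lemma zIter_zero (x : ℝ) : zIter F Finv 0 x = x := by simp [zIter]

namespace LiftPair
variable (hp : LiftPair F Finv)
include hp

lemma symm : LiftPair Finv F :=
  ⟨hp.inv_contDiff, hp.inv_deriv_pos, hp.inv_translate, hp.inv_right,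
    hp.contDiff, hp.deriv_pos, hp.translate⟩

lemma image_Ioo (x y : ℝ) : F '' Set.Ioo x y = Set.Ioo (F x) (F y) := by
  ext w
  constructor
  · rintro ⟨s, hs, rfl⟩
    exact ⟨hp.mono hs.1, hp.mono hs.2⟩
  · intro hw
    refine ⟨Finv w, ⟨?_, ?_⟩, hp.inv_right w⟩
    · have h1 : F x < F (Finv w) := by rw [hp.inv_right]; exact hw.1
      exact hp.mono.lt_iff_lt.1 h1
    · have h1 : F (Finv w) < F y := by rw [hp.inv_right]; exact hw.2
      exact hp.mono.lt_iff_lt.1 h1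

end LiftPair
end MoreBasic

section MainDynamics
open Filter MeasureTheory

lemma proj_coe (g : CircleDiffeo) (htr : ∀ (k : ℤ) (x : ℝ), g.toFun (x + k) = g.toFun x + k)
    (x : ℝ) : g.proj (circ x) = circ (g.toFun x) := by
  unfold CircleDiffeo.proj
  have h1 : ((AddCircle.equivIco 1 0 (circ x)) : ℝ) = Int.fract x := by
    rw [AddCircle.coe_equivIco_mk_apply]
    simp
  rw [h1, show Int.fract x = x + ((-⌊x⌋ : ℤ) : ℝ) by rw [Int.fract]; push_cast; ring, htr]
  exact circ_eq_iff.2 ⟨⌊x⌋, by push_cast; ring⟩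

lemma proj_cont (g : CircleDiffeo) (htr : ∀ (k : ℤ) (x : ℝ), g.toFun (x + k) = g.toFun x + k) :
    Continuous g.proj := by
  have hq := QuotientAddGroup.isQuotientMap_mk (AddSubgroup.zmultiples (1:ℝ))
  rw [hq.continuous_iff]
  have heq : g.proj ∘ ((↑) : ℝ → AddCircle (1:ℝ)) = fun x => circ (g.toFun x) :=
    funext (proj_coe g htr)
  rw [heq]
  exact circ_cont.comp g.contDiff.continuous

lemma lengths_finite (f finv : CircleDiffeo) (hp : LiftPair f.toFun finv.toFun)
    {α : ℝ} (hα : Irrational α)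
    (hrot : Tendsto (fun n : ℕ => f.toFun^[n] 0 / (n : ℝ)) atTop (nhds α))
    {a b : ℝ} (hab : a < b) (hab1 : b < a + 1)
    {M : Set (AddCircle (1:ℝ))} (hM : IsMinimalSet f.proj M)
    (hwand : IsWanderingArc M a b) (η : ℝ) (hη : 0 < η) :
    {j : ℤ | η < zIter f.toFun finv.toFun j b - zIter f.toFun finv.toFun j a}.Finite := by
  set F := f.toFun with hF
  set Finv := finv.toFun with hFinv
  set u : ℤ → ℝ := fun j => zIter F Finv j a with hu
  set v : ℤ → ℝ := fun j => zIter F Finv j b with hv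
  have huv : ∀ i, u i < v i := fun i => hp.zIter_mono i hab
  have hv1 : ∀ i, v i < u i + 1 := by
    intro i
    have h1 : zIter F Finv i b < zIter F Finv i (a+1) := hp.zIter_mono i hab1
    rw [hp.zIter_translate i a] at h1
    exact h1
  have hTmk : ∀ x, f.proj (circ x) = circ (F x) := proj_coe f hp.translate_int
  have hSmk : ∀ x, finv.proj (circ x) = circ (Finv x) := proj_coe finv hp.symm.translate_int
  have hTS : ∀ z, finv.proj (f.proj z) = z := by
    intro z
    obtain ⟨x, rfl⟩ := QuotientAddGroup.mk_surjective z
    rw [show ((x : AddCircle (1:ℝ))) = circ x from rfl, hTmk, hSmk, hp.inv_left]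
  have hST : ∀ z, f.proj (finv.proj z) = z := by
    intro z
    obtain ⟨x, rfl⟩ := QuotientAddGroup.mk_surjective z
    rw [show ((x : AddCircle (1:ℝ))) = circ x from rfl, hSmk, hTmk, hp.inv_right]
  have hTcont : Continuous f.proj := proj_cont f hp.translate_int
  set Θ : AddCircle (1:ℝ) ≃ₜ AddCircle (1:ℝ) :=
    Continuous.homeoOfEquivCompactToT2 (f := ⟨f.proj, finv.proj, hTS, hST⟩) hTcont with hΘ
  have hΘapp : ∀ z, Θ z = f.proj z := fun z => rfl
  have hΘsymm : ∀ z, Θ.symm z = finv.proj z := fun z => rfl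
  obtain ⟨hMne, hMcl, hMinv, hMmin⟩ := hM
  have hTM : f.proj '' M = M :=
    hMmin _ hMinv (hMne.image _) ((hMcl.isCompact.image hTcont).isClosed)
      (Set.image_mono (f := _) hMinv)
  have hΘM : Θ '' M = M := by rw [show Θ '' M = f.proj '' M from rfl]; exact hTM
  have hcompl : Θ '' Mᶜ = Mᶜ := by
    rw [Set.image_compl_eq Θ.bijective, hΘM]
  have hcomplS : Θ.symm '' Mᶜ = Mᶜ := by
    conv_lhs => rw [← hcompl, ← Set.image_comp]
    rw [show (⇑Θ.symm ∘ ⇑Θ) = id from funext fun z => Θ.symm_apply_apply z, Set.image_id]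
  have hAstep : ∀ i : ℤ, Θ '' (circ '' Set.Ioo (u i) (v i)) = circ '' Set.Ioo (u (i+1)) (v (i+1)) := by
    intro i
    rw [Set.image_image]
    have h1 : (fun x => Θ (circ x)) = fun x => circ (F x) := by
      funext x
      rw [hΘapp, hTmk]
    rw [h1, show u (i+1) = F (u i) from hp.zIter_succ i a,
      show v (i+1) = F (v i) from hp.zIter_succ i b, ← hp.image_Ioo, Set.image_image]
  have hQ : ∀ i : ℤ, ∃ w ∈ Mᶜ, circ '' Set.Ioo (u i) (v i) = connectedComponentIn Mᶜ w := by
    intro i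
    induction i using Int.induction_on with
    | zero =>
        obtain ⟨z, hz, hzeq⟩ := hwand
        refine ⟨z, hz, ?_⟩
        rw [show u 0 = a from zIter_zero a, show v 0 = b from zIter_zero b]
        exact hzeq.symm
    | succ i ih =>
        obtain ⟨w, hw, hA⟩ := ih
        refine ⟨Θ w, ?_, ?_⟩
        · rw [← hcompl]; exact Set.mem_image_of_mem _ hw
        · rw [← hAstep i, hA, Θ.image_connectedComponentIn hw, hcompl]
    | pred i ih =>
        obtain ⟨w, hw, hA⟩ := ih
        refine ⟨Θ.symm w, ?_, ?_⟩
        · rw [← hcomplS]; exact Set.mem_image_of_mem _ hw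
        · have hstep := hAstep (-(i:ℤ) - 1)
          rw [show -(i:ℤ) - 1 + 1 = -(i:ℤ) by ring] at hstep
          have : circ '' Set.Ioo (u (-(i:ℤ) - 1)) (v (-(i:ℤ) - 1))
              = Θ.symm '' (circ '' Set.Ioo (u (-(i:ℤ))) (v (-(i:ℤ)))) := by
            rw [← hstep, ← Set.image_comp,
              show (⇑Θ.symm ∘ ⇑Θ) = id from funext fun z => Θ.symm_apply_apply z, Set.image_id]
          rw [this, hA, Θ.symm.image_connectedComponentIn hw, hcomplS]
  -- pairwise distinct arcs
  have hne : ∀ i j : ℤ, i < j →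
      circ '' Set.Ioo (u i) (v i) ≠ circ '' Set.Ioo (u j) (v j) := by
    intro i j hij heq
    set k : ℕ := (j - i).toNat with hk
    have hk0 : 0 < k := by omega
    have hjik : j = i + (k:ℤ) := by omega
    have huj : u j = F^[k] (u i) := by
      show zIter F Finv j a = F^[k] (zIter F Finv i a)
      rw [hjik]
      exact hp.zIter_add_nat i k a
    have hvj : v j = F^[k] (v i) := by
      show zIter F Finv j b = F^[k] (zIter F Finv i b)
      rw [hjik]
      exact hp.zIter_add_nat i k b
    rw [huj, hvj] at heq
    obtain ⟨m, hm⟩ := arc_eq_endpoints (huv i) (hv1 i)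
      (by rw [← huj, ← hvj]; exact huv j) (by rw [← huj, ← hvj]; exact hv1 j) heq
    exact no_periodic hp hα hrot hk0 (hm ▸ rfl : F^[k] (u i) = u i + m)
  have hdisj : Pairwise (Function.onFun Disjoint (fun j : ℤ => circ '' Set.Ioo (u j) (v j))) := by
    intro i j hij
    rw [Function.onFun]
    rw [Set.disjoint_iff_inter_eq_empty]
    by_contra hcon
    obtain ⟨x, hxi, hxj⟩ := Set.nonempty_iff_ne_empty.2 hcon
    obtain ⟨wi, hwi, hAi⟩ := hQ i
    obtain ⟨wj, hwj, hAj⟩ := hQ j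
    have h1 : connectedComponentIn Mᶜ x = circ '' Set.Ioo (u i) (v i) := by
      rw [hAi] at hxi ⊢
      first
      | exact connectedComponentIn_eq hxi
      | exact (connectedComponentIn_eq hxi).symm
    have h2 : connectedComponentIn Mᶜ x = circ '' Set.Ioo (u j) (v j) := by
      rw [hAj] at hxj ⊢
      first
      | exact connectedComponentIn_eq hxj
      | exact (connectedComponentIn_eq hxj).symm
    rcases lt_or_gt_of_ne hij with hlt | hgt
    · exact hne i j hlt (h1.symm.trans h2)
    · exact hne j i hgt (h2.symm.trans h1)
  -- measure argument
  have hmeas : ∀ j : ℤ, MeasurableSet (circ '' Set.Ioo (u j) (v j)) :=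
    fun j => (QuotientAddGroup.isOpenMap_coe _ isOpen_Ioo).measurableSet
  have hvol : ∀ j : ℤ, volume (circ '' Set.Ioo (u j) (v j)) = ENNReal.ofReal (v j - u j) := by
    intro j
    rw [AddCircle.add_projection_respects_measure (T := 1) (u j) (hmeas j)]
    have hseteq : QuotientAddGroup.mk ⁻¹' (circ '' Set.Ioo (u j) (v j)) ∩
        Set.Ioc (u j) (u j + 1) = Set.Ioo (u j) (v j) := by
      ext x
      constructor
      · rintro ⟨hx1, hx2⟩
        have hx1' : circ x ∈ circ '' Set.Ioo (u j) (v j) := hx1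
        obtain ⟨kk, hkk⟩ := circ_arc_mem.1 hx1'
        rcases lt_trichotomy kk 0 with hneg | hzero | hpos
        · exfalso
          have : (kk:ℝ) ≤ -1 := by
            have h9 : kk ≤ -1 := by omega
            exact_mod_cast h9
          have := hkk.1
          have := hx2.2
          linarith
        · rw [hzero] at hkk
          simpa using hkk
        · exfalso
          have : (1:ℝ) ≤ (kk:ℝ) := by exact_mod_cast hpos
          have := hkk.2
          have := hx2.1
          have := hv1 j
          linarith
      · intro hx
        refine ⟨Set.mem_image_of_mem circ hx, hx.1, ?_⟩
        have := hv1 j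
        have := hx.2
        linarith
    rw [hseteq, Real.volume_Ioo]
  have hsub : {j : ℤ | η < zIter F Finv j b - zIter F Finv j a} ⊆
      {j : ℤ | ENNReal.ofReal η ≤ volume (circ '' Set.Ioo (u j) (v j))} := by
    intro j hj
    rw [Set.mem_setOf_eq, hvol j]
    exact ENNReal.ofReal_le_ofReal (le_of_lt hj)
  have hfin := MeasureTheory.Measure.finite_const_le_meas_of_disjoint_iUnion volume
    (ε := ENNReal.ofReal η) (ENNReal.ofReal_pos.2 hη) hmeas hdisj (measure_ne_top _ _)
  exact hfin.subset hsub

end MainDynamics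


/-- **Lemma.** Let `f` be a `C¹`-diffeomorphism of `S¹` with irrational rotation number,
`ε > 0`, and `[a,b]` a maximal wandering interval. Then there is a family of
diffeomorphisms `hᵢ : fⁱ([a,b]) → fⁱ([a,b])`, `i ∈ ℤ`, such that `hᵢ = id` for
`|i| ≥ n₀` and the distorsion of `h_{i+1}∘f∘hᵢ⁻¹ : fⁱ([a,b]) → f^{i+1}([a,b])` is
bounded by `ε` for every `i` (by the chain rule, the derivative of `h_{i+1}∘f∘hᵢ⁻¹`
at the point `hᵢ(w)` is `h'_{i+1}(f(w))·f'(w)/h'ᵢ(w)` for `w ∈ fⁱ([a,b])`). -/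
theorem wandering_interval_conjugacy (α : ℝ) (hα : Irrational α)
    (f : CircleDiffeo) (hf : hasRotationNumber f α)
    (finv : CircleDiffeo) (hfinv : ∀ z : ℝ, finv.toFun (f.toFun z) = z)
    (ε : ℝ) (hε : 0 < ε) (a b : ℝ) (hab : a < b) (hab1 : b < a + 1)
    (M : Set (AddCircle (1:ℝ))) (hM : IsMinimalSet f.proj M)
    (hwand : IsWanderingArc M a b) :
    ∃ (n₀ : ℕ) (h : ℤ → ℝ → ℝ),
      (∀ i : ℤ, IsIntervalDiffeo (h i)
        (zIter f.toFun finv.toFun i a) (zIter f.toFun finv.toFun i b)) ∧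
      (∀ i : ℤ, (n₀ : ℤ) ≤ |i| →
        ∀ w ∈ Set.Icc (zIter f.toFun finv.toFun i a) (zIter f.toFun finv.toFun i b),
          h i w = w) ∧
      (∀ i : ℤ,
        ∀ w₁ ∈ Set.Icc (zIter f.toFun finv.toFun i a) (zIter f.toFun finv.toFun i b),
        ∀ w₂ ∈ Set.Icc (zIter f.toFun finv.toFun i a) (zIter f.toFun finv.toFun i b),
          Real.log
            ((derivWithin (h (i + 1))
                (Set.Icc (zIter f.toFun finv.toFun (i + 1) a)
                  (zIter f.toFun finv.toFun (i + 1) b)) (f.toFun w₁) *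
              deriv f.toFun w₁ /
              derivWithin (h i)
                (Set.Icc (zIter f.toFun finv.toFun i a)
                  (zIter f.toFun finv.toFun i b)) w₁) /
            (derivWithin (h (i + 1))
                (Set.Icc (zIter f.toFun finv.toFun (i + 1) a)
                  (zIter f.toFun finv.toFun (i + 1) b)) (f.toFun w₂) *
              deriv f.toFun w₂ /
              derivWithin (h i)
                (Set.Icc (zIter f.toFun finv.toFun i a)
                  (zIter f.toFun finv.toFun i b)) w₂)) ≤ ε) := by
  
  have hp : LiftPair f.toFun finv.toFun :=
    ⟨f.contDiff, f.deriv_pos, f.commute_translation, hfinv,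
      finv.contDiff, finv.deriv_pos, finv.commute_translation⟩
  exact construction hp hε hab
    (fun η hη => lengths_finite f finv hp hα hf hab hab1 hM hwand η hη)
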